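/- (Theorem 1.) Fix finite nonempty alphabets 𝒳 and 𝒴, a rate R > 0, and ε > ε₁ > 0. For each block length n ≥ 1, let W_n be a channel, let Q_n be a probability mass function on 𝒳^n, set M_n = ⌈2^{nR}⌉ and M'_n = ⌈M_n(1+ε)⌉, and let μ_n be a pairwise-independent ensemble with M'_n codewords and marginal Q_n. Suppose for each n there is ρ̂_n ≥ 1 attaining max_{ρ ≥ 1} [ E_x^{(n)}(ρ, Q_n) − ρR ], and set E_ex^n(R) = E_x^{(n)}(ρ̂_n, Q_n) − ρ̂_n R. Suppose there is a sequence (γ_n) of positive reals with γ_n → ∞, (log₂ γ_n)/n → 0, and δ_n := (ρ̂_n/n)·log₂ γ_n → 0. Define Φ_n(c) = #{ m ∈ {1,…,M'_n} : −(1/n)·log₂ P_{e,m}(c) > E_ex^n(R) − δ_n } (with the convention −log₂ 0 = +∞). Then lim_{n→∞} μ_n[ Φ_n(C) ≥ M_n(1+ε₁) ] = 1. -/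

import Mathlib

open scoped Classical
open scoped NNReal

/-- `W` is a channel: nonnegative, and each row sums to one. -/
def IsChannel {𝒳 𝒴 : Type*} [Fintype 𝒴] (W : 𝒳 → 𝒴 → ℝ) : Prop :=
  (∀ x y, 0 ≤ W x y) ∧ ∀ x, ∑ y, W x y = 1

/-- Maximum-likelihood error probability of message `m` under code `c`
(ties counted as errors). -/
noncomputable def Pem {𝒳 𝒴 : Type*} [Fintype 𝒴] {M : ℕ}
    (W : 𝒳 → 𝒴 → ℝ) (c : Fin M → 𝒳) (m : Fin M) : ℝ :=
  ∑ y, W (c m) y * (if ∃ k, k ≠ m ∧ W (c m) y ≤ W (c k) y then (1:ℝ) else 0)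

/-- Bhattacharyya coefficient between inputs `x` and `x'`. -/
noncomputable def Bhat {𝒳 𝒴 : Type*} [Fintype 𝒴] (W : 𝒳 → 𝒴 → ℝ) (x x' : 𝒳) : ℝ :=
  ∑ y, Real.sqrt (W x y * W x' y)

/-- `p` is a probability mass function on a finite type. -/
def IsPMF {α : Type*} [Fintype α] (p : α → ℝ) : Prop :=
  (∀ a, 0 ≤ p a) ∧ ∑ a, p a = 1

/-- Probability of the event `S` under the pmf `μ`. -/
noncomputable def pmfProb {α : Type*} [Fintype α] (μ : α → ℝ) (S : α → Prop) : ℝ :=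
  ∑ a, if S a then μ a else 0

/-- Expectation of `f` under the pmf `μ`. -/
noncomputable def pmfExp {α : Type*} [Fintype α] (μ : α → ℝ) (f : α → ℝ) : ℝ :=
  ∑ a, μ a * f a

/-- `μ` is a pairwise-independent ensemble of `M` codewords with marginal `Q`:
each codeword has law `Q` and each pair of distinct codewords has law `Q × Q`. -/
def PairwiseIndepEnsemble {𝒳 : Type*} [Fintype 𝒳] {M : ℕ}
    (μ : (Fin M → 𝒳) → ℝ) (Q : 𝒳 → ℝ) : Prop :=
  IsPMF μ ∧ IsPMF Q ∧
  (∀ (m : Fin M) (x : 𝒳), pmfProb μ (fun c => c m = x) = Q x) ∧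
  (∀ (m k : Fin M), m ≠ k → ∀ (x x' : 𝒳),
    pmfProb μ (fun c => c m = x ∧ c k = x') = Q x * Q x')

/-- The expurgated exponent function `E_x^{(n)}(ρ, Q)`. -/
noncomputable def ExFun {𝒳 𝒴 : Type*} [Fintype 𝒳] [Fintype 𝒴]
    (n : ℕ) (W : (Fin n → 𝒳) → (Fin n → 𝒴) → ℝ)
    (Q : (Fin n → 𝒳) → ℝ) (ρ : ℝ) : ℝ :=
  -(1 / (n : ℝ)) *
    Real.logb 2 ((∑ x, ∑ x', Q x * Q x' * Bhat W x x' ^ (1/ρ)) ^ ρ)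

/- ### Auxiliary lemmas -/

lemma two_rpow_add_le {a b : ℝ} (ha : 0 ≤ a) (hb : 0 ≤ b) {p : ℝ} (hp : 0 ≤ p) (hp1 : p ≤ 1) :
    (a + b) ^ p ≤ a ^ p + b ^ p := by
  have := NNReal.rpow_add_le_add_rpow a.toNNReal b.toNNReal hp hp1
  have h1 : ((a.toNNReal + b.toNNReal : ℝ≥0) : ℝ) = a + b := by
    simp [Real.coe_toNNReal _ ha, Real.coe_toNNReal _ hb]
  calc (a + b) ^ p = (((a.toNNReal + b.toNNReal : ℝ≥0) : ℝ)) ^ p := by rw [h1]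
    _ = (((a.toNNReal + b.toNNReal) ^ p : ℝ≥0) : ℝ) := by rw [NNReal.coe_rpow]
    _ ≤ ((a.toNNReal ^ p + b.toNNReal ^ p : ℝ≥0) : ℝ) := by exact_mod_cast this
    _ = a ^ p + b ^ p := by
        push_cast [NNReal.coe_rpow, Real.coe_toNNReal _ ha, Real.coe_toNNReal _ hb]; ring

lemma sum_rpow_le {ι : Type*} (s : Finset ι) (f : ι → ℝ) (hf : ∀ i ∈ s, 0 ≤ f i)
    {p : ℝ} (hp : 0 < p) (hp1 : p ≤ 1) :
    (∑ i ∈ s, f i) ^ p ≤ ∑ i ∈ s, f i ^ p := by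
  induction s using Finset.cons_induction with
  | empty => simp [Real.zero_rpow hp.ne']
  | cons a s ha ih =>
    rw [Finset.sum_cons, Finset.sum_cons]
    have hs : 0 ≤ ∑ i ∈ s, f i := Finset.sum_nonneg fun i hi => hf i (Finset.mem_cons_of_mem hi)
    calc (f a + ∑ i ∈ s, f i) ^ p ≤ f a ^ p + (∑ i ∈ s, f i) ^ p :=
          two_rpow_add_le (hf a (Finset.mem_cons_self a s)) hs hp.le hp1
      _ ≤ f a ^ p + ∑ i ∈ s, f i ^ p := by
          have := ih fun i hi => hf i (Finset.mem_cons_of_mem hi)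
          linarith

lemma markov {α : Type*} [Fintype α] (μ : α → ℝ) (hμ : ∀ a, 0 ≤ μ a) (f : α → ℝ)
    (hf : ∀ a, 0 ≤ f a) {t : ℝ} (ht : 0 < t) :
    pmfProb μ (fun a => t ≤ f a) ≤ pmfExp μ f / t := by
  rw [pmfProb, pmfExp, Finset.sum_div]
  refine Finset.sum_le_sum fun a _ => ?_
  by_cases h : t ≤ f a
  · rw [if_pos h, le_div_iff₀ ht]
    have := hμ a; nlinarith
  · rw [if_neg h]
    exact div_nonneg (mul_nonneg (hμ a) (hf a)) ht.le

lemma pmfProb_mono {α : Type*} [Fintype α] (μ : α → ℝ) (hμ : ∀ a, 0 ≤ μ a)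
    {S T : α → Prop} (h : ∀ a, S a → T a) : pmfProb μ S ≤ pmfProb μ T := by
  refine Finset.sum_le_sum fun a _ => ?_
  by_cases hS : S a
  · rw [if_pos hS, if_pos (h a hS)]
  · rw [if_neg hS]
    split
    · exact hμ a
    · exact le_refl 0

lemma pmfExp_mono {α : Type*} [Fintype α] (μ : α → ℝ) (hμ : ∀ a, 0 ≤ μ a)
    {f g : α → ℝ} (h : ∀ a, f a ≤ g a) : pmfExp μ f ≤ pmfExp μ g :=
  Finset.sum_le_sum fun a _ => mul_le_mul_of_nonneg_left (h a) (hμ a)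

lemma pmfProb_nonneg {α : Type*} [Fintype α] (μ : α → ℝ) (hμ : ∀ a, 0 ≤ μ a)
    (S : α → Prop) : 0 ≤ pmfProb μ S :=
  Finset.sum_nonneg fun a _ => by split; exacts [hμ a, le_refl 0]

lemma pmfProb_le_one {α : Type*} [Fintype α] (μ : α → ℝ) (hμ : ∀ a, 0 ≤ μ a)
    (hsum : ∑ a, μ a = 1) (S : α → Prop) : pmfProb μ S ≤ 1 := by
  rw [← hsum]
  refine Finset.sum_le_sum fun a _ => ?_
  split
  · exact le_refl _
  · exact hμ a

lemma pmfProb_compl {α : Type*} [Fintype α] (μ : α → ℝ) (hμ : ∑ a, μ a = 1)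
    (S : α → Prop) : pmfProb μ S = 1 - pmfProb μ (fun a => ¬ S a) := by
  have : pmfProb μ S + pmfProb μ (fun a => ¬ S a) = 1 := by
    rw [pmfProb, pmfProb, ← Finset.sum_add_distrib, ← hμ]
    exact Finset.sum_congr rfl fun a _ => by by_cases h : S a <;> simp [h]
  linarith

lemma pmfExp_sum {α ι : Type*} [Fintype α] (μ : α → ℝ) (s : Finset ι) (F : ι → α → ℝ) :
    pmfExp μ (fun a => ∑ k ∈ s, F k a) = ∑ k ∈ s, pmfExp μ (F k) := by
  rw [pmfExp]
  simp_rw [Finset.mul_sum]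
  rw [Finset.sum_comm]
  rfl

lemma Bhat_nonneg {𝒳 𝒴 : Type*} [Fintype 𝒴] (W : 𝒳 → 𝒴 → ℝ) (x x' : 𝒳) :
    0 ≤ Bhat W x x' :=
  Finset.sum_nonneg fun y _ => Real.sqrt_nonneg _

lemma Pem_nonneg {𝒳 𝒴 : Type*} [Fintype 𝒴] {M : ℕ}
    (W : 𝒳 → 𝒴 → ℝ) (hW : ∀ x y, 0 ≤ W x y) (c : Fin M → 𝒳) (m : Fin M) :
    0 ≤ Pem W c m :=
  Finset.sum_nonneg fun y _ => mul_nonneg (hW _ _) (by positivity)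

lemma Pem_le_sum_Bhat {𝒳 𝒴 : Type*} [Fintype 𝒴] {M : ℕ}
    (W : 𝒳 → 𝒴 → ℝ) (hW : ∀ x y, 0 ≤ W x y) (c : Fin M → 𝒳) (m : Fin M) :
    Pem W c m ≤ ∑ k ∈ Finset.univ.erase m, Bhat W (c m) (c k) := by
  rw [Pem]
  have : ∑ k ∈ Finset.univ.erase m, Bhat W (c m) (c k)
      = ∑ y, ∑ k ∈ Finset.univ.erase m, Real.sqrt (W (c m) y * W (c k) y) := by
    rw [Finset.sum_comm]; rfl
  rw [this]
  refine Finset.sum_le_sum fun y _ => ?_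
  by_cases h : ∃ k, k ≠ m ∧ W (c m) y ≤ W (c k) y
  · rw [if_pos h, mul_one]
    obtain ⟨k, hk, hle⟩ := h
    calc W (c m) y = Real.sqrt (W (c m) y * W (c m) y) := by
          rw [Real.sqrt_mul_self (hW _ _)]
      _ ≤ Real.sqrt (W (c m) y * W (c k) y) := by
          apply Real.sqrt_le_sqrt
          exact mul_le_mul_of_nonneg_left hle (hW _ _)
      _ ≤ ∑ j ∈ Finset.univ.erase m, Real.sqrt (W (c m) y * W (c j) y) :=
          Finset.single_le_sum (f := fun j => Real.sqrt (W (c m) y * W (c j) y))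
            (fun j _ => Real.sqrt_nonneg _) (Finset.mem_erase.mpr ⟨hk, Finset.mem_univ k⟩)
  · rw [if_neg h, mul_zero]
    exact Finset.sum_nonneg fun j _ => Real.sqrt_nonneg _

lemma pmfExp_pair {𝒳 : Type*} [Fintype 𝒳] {M : ℕ}
    (μ : (Fin M → 𝒳) → ℝ) (Q : 𝒳 → ℝ)
    (hpair : ∀ (m k : Fin M), m ≠ k → ∀ (x x' : 𝒳),
      pmfProb μ (fun c => c m = x ∧ c k = x') = Q x * Q x')
    (m k : Fin M) (hmk : m ≠ k) (g : 𝒳 → 𝒳 → ℝ) :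
    pmfExp μ (fun c => g (c m) (c k)) = ∑ x, ∑ x', Q x * Q x' * g x x' := by
  have : ∀ x x', Q x * Q x' * g x x'
      = ∑ c : Fin M → 𝒳, (if c m = x ∧ c k = x' then μ c * g x x' else 0) := by
    intro x x'
    rw [← hpair m k hmk x x', pmfProb, Finset.sum_mul]
    exact Finset.sum_congr rfl fun c _ => by by_cases h : c m = x ∧ c k = x' <;> simp [h]
  simp_rw [this]
  rw [pmfExp]
  have hc : ∀ c : Fin M → 𝒳, μ c * g (c m) (c k)
      = ∑ x : 𝒳, ∑ x' : 𝒳, if c m = x ∧ c k = x' then μ c * g x x' else 0 := by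
    intro c
    rw [show (∑ x : 𝒳, ∑ x' : 𝒳, if c m = x ∧ c k = x' then μ c * g x x' else 0)
      = ∑ x' : 𝒳, ∑ x : 𝒳, if c m = x ∧ c k = x' then μ c * g x x' else 0 from Finset.sum_comm]
    simp [ite_and, Finset.sum_ite_eq]
  simp_rw [hc]
  rw [Finset.sum_comm]
  exact Finset.sum_congr rfl fun x _ => Finset.sum_comm
lemma numeric_bound {ε ε₁ T mR m' u γn : ℝ} (hεd : 0 < ε - ε₁) (hT : 0 < T)
    (hmR1 : 1 ≤ mR) (hm2T : mR ≤ 2 * T) (hm'2 : m' ≤ mR * (2 + ε)) (hm'1 : 1 ≤ m')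
    (hu' : mR * (ε - ε₁) ≤ u) (hu : 0 < u) (hγ : 0 < γn) :
    (m' * ((m' - 1) / (T * γn))) / u ≤ (2 * (2 + ε) ^ 2 / (ε - ε₁)) / γn := by
  set K : ℝ := 2 * (2 + ε) ^ 2 / (ε - ε₁) with hKdef
  have hε0 : (0:ℝ) < 2 + ε := by nlinarith
  have hKpos : 0 < K := by
    apply div_pos _ hεd
    positivity
  have hKT : (0:ℝ) ≤ K * T := mul_nonneg hKpos.le hT.le
  have hKey : m' * (m' - 1) ≤ K * (T * u) := by
    have e0 : m' * (m' - 1) ≤ m' * m' := by nlinarith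
    have e1 : m' * m' ≤ (mR * (2 + ε)) * (mR * (2 + ε)) :=
      mul_le_mul hm'2 hm'2 (by linarith) (mul_nonneg (by linarith) hε0.le)
    have e2 : mR * mR ≤ 2 * T * mR := by nlinarith
    have e3 : K * (T * (mR * (ε - ε₁))) ≤ K * (T * u) := by
      nlinarith [mul_le_mul_of_nonneg_left hu' hKT]
    have e4 : K * (T * (mR * (ε - ε₁))) = 2 * (2 + ε) ^ 2 * T * mR := by
      rw [hKdef]; field_simp
    nlinarith [mul_le_mul_of_nonneg_right e2 (sq_nonneg (2 + ε))]
  calc (m' * ((m' - 1) / (T * γn))) / u = (m' * (m' - 1)) / (T * γn * u) := by ring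
    _ ≤ K / γn := by
        rw [div_le_div_iff₀ (mul_pos (mul_pos hT hγ) hu) hγ]
        nlinarith [mul_le_mul_of_nonneg_right hKey hγ.le]

set_option maxHeartbeats 1000000 in
/-- Theorem 1: with probability tending to one, a random code with
`M'_n = ⌈M_n(1+ε)⌉` codewords contains at least `M_n(1+ε₁)` codewords whose
error exponent exceeds `E_ex^n(R) - δ_n`. -/
theorem theorem1
    {𝒳 𝒴 : Type*} [Fintype 𝒳] [Fintype 𝒴] [Nonempty 𝒳] [Nonempty 𝒴]
    (R : ℝ) (hR : 0 < R) (ε ε₁ : ℝ) (hε₁ : 0 < ε₁) (hεε : ε₁ < ε)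
    (W : ∀ n : ℕ, (Fin n → 𝒳) → (Fin n → 𝒴) → ℝ)
    (hW : ∀ n, 1 ≤ n → IsChannel (W n))
    (Q : ∀ n : ℕ, (Fin n → 𝒳) → ℝ)
    (M M' : ℕ → ℕ)
    (hM : ∀ n, M n = ⌈(2:ℝ) ^ ((n : ℝ) * R)⌉₊)
    (hM' : ∀ n, M' n = ⌈(M n : ℝ) * (1 + ε)⌉₊)
    (μ : ∀ n : ℕ, (Fin (M' n) → (Fin n → 𝒳)) → ℝ)
    (hμ : ∀ n, 1 ≤ n → PairwiseIndepEnsemble (μ n) (Q n))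
    (ρhat : ℕ → ℝ) (hρhat1 : ∀ n, 1 ≤ ρhat n)
    (hρhatmax : ∀ n, 1 ≤ n → ∀ ρ : ℝ, 1 ≤ ρ →
      ExFun n (W n) (Q n) ρ - ρ * R ≤ ExFun n (W n) (Q n) (ρhat n) - ρhat n * R)
    (Eex : ℕ → ℝ) (hEex : ∀ n, Eex n = ExFun n (W n) (Q n) (ρhat n) - ρhat n * R)
    (γ : ℕ → ℝ) (hγpos : ∀ n, 0 < γ n)
    (hγtop : Filter.Tendsto γ Filter.atTop Filter.atTop)
    (hγsub : Filter.Tendsto (fun n => Real.logb 2 (γ n) / (n : ℝ)) Filter.atTop (nhds 0))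
    (δ : ℕ → ℝ) (hδ : ∀ n, δ n = ρhat n / (n : ℝ) * Real.logb 2 (γ n))
    (hδ0 : Filter.Tendsto δ Filter.atTop (nhds 0))
    (Φ : ∀ n : ℕ, (Fin (M' n) → (Fin n → 𝒳)) → ℕ)
    (hΦ : ∀ n c, Φ n c = (Finset.univ.filter (fun m : Fin (M' n) =>
      Pem (W n) c m = 0 ∨
        Eex n - δ n < -(1 / (n : ℝ)) * Real.logb 2 (Pem (W n) c m))).card) :
    Filter.Tendsto
      (fun n => pmfProb (μ n) (fun c => (M n : ℝ) * (1 + ε₁) ≤ (Φ n c : ℝ)))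
      Filter.atTop (nhds 1) := by
  have h2pos : (0:ℝ) < 2 := two_pos
  have hεd : (0:ℝ) < ε - ε₁ := by linarith
  set K : ℝ := 2 * (2 + ε) ^ 2 / (ε - ε₁) with hKdef
  have hKpos : 0 < K := by
    apply div_pos _ hεd
    nlinarith
  have key : ∀ n, 1 ≤ n →
      1 - K / γ n ≤ pmfProb (μ n) (fun c => (M n : ℝ) * (1 + ε₁) ≤ (Φ n c : ℝ)) ∧
      pmfProb (μ n) (fun c => (M n : ℝ) * (1 + ε₁) ≤ (Φ n c : ℝ)) ≤ 1 := by
    intro n hn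
    obtain ⟨hμpmf, hQpmf, hmarg, hpair⟩ := hμ n hn
    obtain ⟨hWnn, hWsum⟩ := hW n hn
    have hμnn := hμpmf.1
    have hμsum := hμpmf.2
    have hn0 : (0:ℝ) < n := by exact_mod_cast hn
    have hρ1 : 1 ≤ ρhat n := hρhat1 n
    have hρ0 : 0 < ρhat n := by linarith
    have hs0 : 0 < 1 / ρhat n := by positivity
    have hs1 : 1 / ρhat n ≤ 1 := by rw [div_le_one hρ0]; exact hρ1
    -- the single-letter quantity S
    set S : ℝ := ∑ x, ∑ x', Q n x * Q n x' * Bhat (W n) x x' ^ (1 / ρhat n) with hSdef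
    have hSnn : 0 ≤ S := Finset.sum_nonneg fun x _ => Finset.sum_nonneg fun x' _ =>
      mul_nonneg (mul_nonneg (hQpmf.1 x) (hQpmf.1 x')) (Real.rpow_nonneg (Bhat_nonneg _ _ _) _)
    have hE : ExFun n (W n) (Q n) (ρhat n)
        = -(1 / (n:ℝ)) * Real.logb 2 (S ^ ρhat n) := rfl
    set T : ℝ := (2:ℝ) ^ ((n:ℝ) * R) with hTdef
    have hTpos : (0:ℝ) < T := Real.rpow_pos_of_pos h2pos _
    have hT1 : (1:ℝ) ≤ T := by
      rw [hTdef, show (1:ℝ) = (2:ℝ) ^ (0:ℝ) from (Real.rpow_zero 2).symm]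
      exact Real.rpow_le_rpow_of_exponent_le one_le_two (by positivity)
    set V : ℝ := (2:ℝ) ^ (-((n:ℝ) * ExFun n (W n) (Q n) (ρhat n)) * (1 / ρhat n)) with hVdef
    have hVpos : 0 < V := Real.rpow_pos_of_pos h2pos _
    have hSV : S ≤ V := by
      rcases eq_or_lt_of_le hSnn with h0 | hSpos
      · linarith
      · have hSρ : 0 < S ^ ρhat n := Real.rpow_pos_of_pos hSpos _
        have hL : -((n:ℝ) * ExFun n (W n) (Q n) (ρhat n)) = Real.logb 2 (S ^ ρhat n) := by
          rw [hE]; field_simp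
        refine le_of_eq ?_
        rw [hVdef, hL, Real.rpow_mul h2pos.le,
          Real.rpow_logb h2pos (by norm_num) hSρ, one_div,
          Real.rpow_rpow_inv hSnn hρ0.ne']
    -- the threshold t
    set t : ℝ := (2:ℝ) ^ (-(n:ℝ) * (Eex n - δ n)) with htdef
    have htpos : 0 < t := Real.rpow_pos_of_pos h2pos _
    have hts : t ^ (1 / ρhat n) = V * T * γ n := by
      rw [htdef, ← Real.rpow_mul h2pos.le]
      have hexp : -(n:ℝ) * (Eex n - δ n) * (1 / ρhat n)
          = -((n:ℝ) * ExFun n (W n) (Q n) (ρhat n)) * (1 / ρhat n)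
            + (n:ℝ) * R + Real.logb 2 (γ n) := by
        rw [hEex n, hδ n]
        field_simp
        ring
      rw [hexp, Real.rpow_add h2pos, Real.rpow_add h2pos, ← hVdef, ← hTdef,
        Real.rpow_logb h2pos (by norm_num) (hγpos n)]
    -- basic size facts
    have hMn1 : 1 ≤ M n := by
      rw [hM n]
      exact Nat.one_le_ceil_iff.mpr (Real.rpow_pos_of_pos h2pos _)
    have hmR1 : (1:ℝ) ≤ (M n : ℝ) := by exact_mod_cast hMn1
    have hMTle : T ≤ (M n : ℝ) := by rw [hM n, hTdef]; exact Nat.le_ceil _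
    have hMTle2 : (M n : ℝ) ≤ 2 * T := by
      have : (M n : ℝ) < T + 1 := by
        rw [hM n, hTdef]
        exact_mod_cast Nat.ceil_lt_add_one (le_of_lt (Real.rpow_pos_of_pos h2pos _))
      linarith
    have hm'ge : (M n : ℝ) * (1 + ε) ≤ (M' n : ℝ) := by rw [hM' n]; exact Nat.le_ceil _
    have hm'le : (M' n : ℝ) ≤ (M n : ℝ) * (1 + ε) + 1 := by
      rw [hM' n]
      exact le_of_lt (by exact_mod_cast Nat.ceil_lt_add_one (mul_nonneg (by positivity) (by linarith)))
    have hm'2 : (M' n : ℝ) ≤ (M n : ℝ) * (2 + ε) := by nlinarith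
    have hm'1R : (1:ℝ) ≤ (M' n : ℝ) := by nlinarith
    have hM'1 : 1 ≤ M' n := by exact_mod_cast (by exact_mod_cast hm'1R : (1:ℕ) ≤ M' n)
    -- the per-message bad probability bound
    have h1 : ∀ m : Fin (M' n),
        pmfProb (μ n) (fun c => t ≤ Pem (W n) c m) ≤ ((M' n : ℝ) - 1) / (T * γ n) := by
      intro m
      have hfnn : ∀ c, 0 ≤ Pem (W n) c m ^ (1 / ρhat n) :=
        fun c => Real.rpow_nonneg (Pem_nonneg _ hWnn c m) _
      have htspos : 0 < t ^ (1 / ρhat n) := Real.rpow_pos_of_pos htpos _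
      have hmark := markov (μ n) hμnn (fun c => Pem (W n) c m ^ (1 / ρhat n)) hfnn htspos
      have hincl : pmfProb (μ n) (fun c => t ≤ Pem (W n) c m)
          ≤ pmfProb (μ n) (fun c => t ^ (1 / ρhat n) ≤ Pem (W n) c m ^ (1 / ρhat n)) :=
        pmfProb_mono _ hμnn fun c h => Real.rpow_le_rpow htpos.le h hs0.le
      have hexp2 : pmfExp (μ n) (fun c => Pem (W n) c m ^ (1 / ρhat n))
          ≤ ((M' n : ℝ) - 1) * S := by
        calc pmfExp (μ n) (fun c => Pem (W n) c m ^ (1 / ρhat n))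
            ≤ pmfExp (μ n) (fun c => ∑ k ∈ Finset.univ.erase m,
                Bhat (W n) (c m) (c k) ^ (1 / ρhat n)) := by
              refine pmfExp_mono _ hμnn fun c => ?_
              calc Pem (W n) c m ^ (1 / ρhat n)
                  ≤ (∑ k ∈ Finset.univ.erase m, Bhat (W n) (c m) (c k)) ^ (1 / ρhat n) :=
                    Real.rpow_le_rpow (Pem_nonneg _ hWnn c m)
                      (Pem_le_sum_Bhat _ hWnn c m) hs0.le
                _ ≤ ∑ k ∈ Finset.univ.erase m, Bhat (W n) (c m) (c k) ^ (1 / ρhat n) :=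
                    sum_rpow_le _ _ (fun k _ => Bhat_nonneg _ _ _) hs0 hs1
          _ = ∑ k ∈ Finset.univ.erase m, S := by
              rw [pmfExp_sum]
              refine Finset.sum_congr rfl fun k hk => ?_
              exact pmfExp_pair (μ n) (Q n) hpair m k
                (Ne.symm (Finset.mem_erase.1 hk).1) (fun x x' => Bhat (W n) x x' ^ (1 / ρhat n))
          _ = ((M' n : ℝ) - 1) * S := by
              rw [Finset.sum_const, Finset.card_erase_of_mem (Finset.mem_univ m),
                Finset.card_univ, Fintype.card_fin, nsmul_eq_mul,
                Nat.cast_sub hM'1, Nat.cast_one]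
      calc pmfProb (μ n) (fun c => t ≤ Pem (W n) c m)
          ≤ pmfExp (μ n) (fun c => Pem (W n) c m ^ (1 / ρhat n)) / t ^ (1 / ρhat n) :=
            le_trans hincl hmark
        _ ≤ ((M' n : ℝ) - 1) * S / t ^ (1 / ρhat n) := by gcongr
        _ = ((M' n : ℝ) - 1) * S / (V * T * γ n) := by rw [hts]
        _ ≤ ((M' n : ℝ) - 1) * V / (V * T * γ n) := by
            have h0 : (0:ℝ) ≤ (M' n : ℝ) - 1 := by linarith
            have hd : (0:ℝ) < V * T * γ n := mul_pos (mul_pos hVpos hTpos) (hγpos n)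
            gcongr
        _ = ((M' n : ℝ) - 1) / (T * γ n) := by
            rw [show V * T * γ n = V * (T * γ n) by ring,
              mul_comm ((M' n : ℝ) - 1) V, mul_div_mul_left _ _ hVpos.ne']
    -- goodness is equivalent to being below the threshold
    have hgood : ∀ (c : Fin (M' n) → Fin n → 𝒳) (m : Fin (M' n)),
        ¬ (Pem (W n) c m = 0 ∨
          Eex n - δ n < -(1 / (n:ℝ)) * Real.logb 2 (Pem (W n) c m)) ↔ t ≤ Pem (W n) c m := by
      intro c m
      have hP0 : 0 ≤ Pem (W n) c m := Pem_nonneg _ hWnn c m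
      have hex : ∀ X : ℝ, (n:ℝ) * (-(1 / (n:ℝ)) * X) = -X := by
        intro X; field_simp
      constructor
      · intro h
        push_neg at h
        obtain ⟨h0, hlog⟩ := h
        have hPpos : 0 < Pem (W n) c m := lt_of_le_of_ne hP0 (Ne.symm h0)
        by_contra hlt
        push_neg at hlt
        have h2 : Real.logb 2 (Pem (W n) c m) < -(n:ℝ) * (Eex n - δ n) :=
          (Real.logb_lt_iff_lt_rpow one_lt_two hPpos).mpr hlt
        have h3 : -Real.logb 2 (Pem (W n) c m) ≤ (n:ℝ) * (Eex n - δ n) := by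
          have := mul_le_mul_of_nonneg_left hlog hn0.le
          rw [hex (Real.logb 2 (Pem (W n) c m))] at this
          exact this
        linarith
      · intro h hgd
        rcases hgd with h0 | hlog
        · rw [h0] at h; linarith
        · have hPpos : 0 < Pem (W n) c m := lt_of_lt_of_le htpos h
          have h2 : -(n:ℝ) * (Eex n - δ n) ≤ Real.logb 2 (Pem (W n) c m) :=
            (Real.le_logb_iff_rpow_le one_lt_two hPpos).mpr h
          have h3 : (n:ℝ) * (Eex n - δ n) < -Real.logb 2 (Pem (W n) c m) := by
            have := mul_lt_mul_of_pos_left hlog hn0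
            rw [hex (Real.logb 2 (Pem (W n) c m))] at this
            exact this
          linarith
    -- the number of bad codewords
    set N : (Fin (M' n) → Fin n → 𝒳) → ℝ :=
      fun c => ∑ m : Fin (M' n), if t ≤ Pem (W n) c m then (1:ℝ) else 0 with hNdef
    have hNnn : ∀ c, 0 ≤ N c :=
      fun c => Finset.sum_nonneg fun m _ => by positivity
    have hNcount : ∀ c, N c = (M' n : ℝ) - (Φ n c : ℝ) := by
      intro c
      have h1' : N c
          = ((Finset.univ.filter (fun m : Fin (M' n) => t ≤ Pem (W n) c m)).card : ℝ) := by
        simp only [hNdef]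
        rw [Finset.sum_boole]
      have hfil : Finset.univ.filter (fun m : Fin (M' n) => t ≤ Pem (W n) c m)
          = Finset.univ.filter (fun m : Fin (M' n) => ¬ (Pem (W n) c m = 0 ∨
              Eex n - δ n < -(1 / (n:ℝ)) * Real.logb 2 (Pem (W n) c m))) :=
        Finset.filter_congr fun m _ => (hgood c m).symm
      have hsplit := Finset.card_filter_add_card_filter_not
        (s := (Finset.univ : Finset (Fin (M' n))))
        (p := fun m : Fin (M' n) => Pem (W n) c m = 0 ∨
          Eex n - δ n < -(1 / (n:ℝ)) * Real.logb 2 (Pem (W n) c m))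
      rw [Finset.card_univ, Fintype.card_fin] at hsplit
      rw [h1', hfil, hΦ n c]
      have hsplit' : ((Finset.univ.filter (fun m : Fin (M' n) => Pem (W n) c m = 0 ∨
            Eex n - δ n < -(1 / (n:ℝ)) * Real.logb 2 (Pem (W n) c m))).card : ℝ)
          + ((Finset.univ.filter (fun m : Fin (M' n) => ¬ (Pem (W n) c m = 0 ∨
            Eex n - δ n < -(1 / (n:ℝ)) * Real.logb 2 (Pem (W n) c m)))).card : ℝ)
          = (M' n : ℝ) := by exact_mod_cast hsplit
      linarith
    set u : ℝ := (M' n : ℝ) - (M n : ℝ) * (1 + ε₁) with hudef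
    have hu' : (M n : ℝ) * (ε - ε₁) ≤ u := by rw [hudef]; nlinarith
    have hu : 0 < u := by nlinarith
    -- bound the probability of the bad event
    have hbad : pmfProb (μ n) (fun c => ¬ ((M n : ℝ) * (1 + ε₁) ≤ (Φ n c : ℝ))) ≤ K / γ n := by
      have hstep1 : pmfProb (μ n) (fun c => ¬ ((M n : ℝ) * (1 + ε₁) ≤ (Φ n c : ℝ)))
          ≤ pmfProb (μ n) (fun c => u ≤ N c) := by
        refine pmfProb_mono _ hμnn fun c h => ?_
        push_neg at h
        rw [hNcount c, hudef]
        linarith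
      have hstep2 := markov (μ n) hμnn N hNnn hu
      have hstep3 : pmfExp (μ n) N ≤ (M' n : ℝ) * (((M' n : ℝ) - 1) / (T * γ n)) := by
        rw [hNdef, pmfExp_sum (μ n) Finset.univ
          (fun (m : Fin (M' n)) c => if t ≤ Pem (W n) c m then (1:ℝ) else 0)]
        have hPP : ∀ m : Fin (M' n),
            pmfExp (μ n) (fun c => if t ≤ Pem (W n) c m then (1:ℝ) else 0)
            = pmfProb (μ n) (fun c => t ≤ Pem (W n) c m) := by
          intro m
          rw [pmfExp, pmfProb]
          exact Finset.sum_congr rfl fun a _ => by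
            by_cases h : t ≤ Pem (W n) a m <;> simp [h]
        calc ∑ m : Fin (M' n), pmfExp (μ n) (fun c => if t ≤ Pem (W n) c m then (1:ℝ) else 0)
            = ∑ m : Fin (M' n), pmfProb (μ n) (fun c => t ≤ Pem (W n) c m) :=
              Finset.sum_congr rfl fun m _ => hPP m
          _ ≤ ∑ _m : Fin (M' n), ((M' n : ℝ) - 1) / (T * γ n) :=
              Finset.sum_le_sum fun m _ => h1 m
          _ = (M' n : ℝ) * (((M' n : ℝ) - 1) / (T * γ n)) := by
              rw [Finset.sum_const, Finset.card_univ, Fintype.card_fin, nsmul_eq_mul]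
      calc pmfProb (μ n) (fun c => ¬ ((M n : ℝ) * (1 + ε₁) ≤ (Φ n c : ℝ)))
          ≤ pmfExp (μ n) N / u := le_trans hstep1 hstep2
        _ ≤ ((M' n : ℝ) * (((M' n : ℝ) - 1) / (T * γ n))) / u := by gcongr
        _ ≤ (2 * (2 + ε) ^ 2 / (ε - ε₁)) / γ n :=
            numeric_bound hεd hTpos hmR1 hMTle2 hm'2 hm'1R hu' hu (hγpos n)
        _ = K / γ n := by rw [hKdef]
    constructor
    · rw [pmfProb_compl (μ n) hμsum (fun c => (M n : ℝ) * (1 + ε₁) ≤ (Φ n c : ℝ))]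
      linarith
    · exact pmfProb_le_one _ hμnn hμsum _
  have hlim : Filter.Tendsto (fun n => 1 - K / γ n) Filter.atTop (nhds 1) := by
    have h0 : Filter.Tendsto (fun n => K / γ n) Filter.atTop (nhds 0) :=
      Filter.Tendsto.div_atTop tendsto_const_nhds hγtop
    have h1 := Filter.Tendsto.const_sub (1:ℝ) h0
    simpa using h1
  refine tendsto_of_tendsto_of_tendsto_of_le_of_le' hlim tendsto_const_nhds ?_ ?_
  · filter_upwards [Filter.eventually_ge_atTop 1] with n hn
    exact (key n hn).1
  · filter_upwards [Filter.eventually_ge_atTop 1] with n hn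
    exact (key n hn).2
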